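/- Let X, Y be n×k matrices with X^T X = Y^T Y = I_k such that I_k + X^T Y is invertible, and set V = 2Y(I_k + X^T Y)^{-1}. Then V satisfies the Cayley equation (I_n + (1/2)(V X^T - X V^T)) X = (I_n - (1/2)(V X^T - X V^T)) Y. -/
import Mathlib


open Matrix

theorem stmt3 {n k : ℕ} (X Y : Matrix (Fin n) (Fin k) ℝ)
    (hX : Xᵀ * X = 1) (hY : Yᵀ * Y = 1)
    (hinv : IsUnit (1 + Xᵀ * Y))
    (V : Matrix (Fin n) (Fin k) ℝ)
    (hV : V = (2 : ℝ) • (Y * (1 + Xᵀ * Y)⁻¹)) :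
    (1 + (1 / 2 : ℝ) • (V * Xᵀ - X * Vᵀ)) * X
      = (1 - (1 / 2 : ℝ) • (V * Xᵀ - X * Vᵀ)) * Y := by
  set A := 1 + Xᵀ * Y with hA
  have hd : IsUnit A.det := (Matrix.isUnit_iff_isUnit_det A).mp hinv
  have h1 : A⁻¹ * A = 1 := Matrix.nonsing_inv_mul A hd
  have h2 : A * A⁻¹ = 1 := Matrix.mul_nonsing_inv A hd
  have hYX : Yᵀ * X = Aᵀ - 1 := by
    have : (Xᵀ * Y)ᵀ = Aᵀ - 1 := by rw [hA]; simp [Matrix.transpose_add]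
    simpa [Matrix.transpose_mul] using this
  have hXY : Xᵀ * Y = A - 1 := by rw [hA, add_sub_cancel_left]
  have hB : (1 / 2 : ℝ) • (V * Xᵀ - X * Vᵀ)
      = Y * A⁻¹ * Xᵀ - X * (A⁻¹)ᵀ * Yᵀ := by
    subst hV
    rw [Matrix.transpose_smul, Matrix.transpose_mul]
    rw [Matrix.smul_mul, Matrix.mul_smul, ← smul_sub, smul_smul]
    norm_num [Matrix.mul_assoc]
  rw [hB]
  have hAt : (A⁻¹)ᵀ * Aᵀ = 1 := by rw [← Matrix.transpose_mul, h2, Matrix.transpose_one]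
  have lhs : (1 + (Y * A⁻¹ * Xᵀ - X * (A⁻¹)ᵀ * Yᵀ)) * X
      = X + (Y * A⁻¹ + (X * (A⁻¹)ᵀ - X)) := by
    rw [Matrix.add_mul, Matrix.one_mul, Matrix.sub_mul, Matrix.mul_assoc (Y * A⁻¹) Xᵀ X, hX,
      Matrix.mul_assoc (X * (A⁻¹)ᵀ) Yᵀ X, hYX, Matrix.mul_sub, Matrix.mul_one,
      Matrix.mul_assoc X (A⁻¹)ᵀ Aᵀ, hAt, Matrix.mul_one, Matrix.mul_one]
    abel
  have rhs : (1 - (Y * A⁻¹ * Xᵀ - X * (A⁻¹)ᵀ * Yᵀ)) * Y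
      = Y - (Y * A⁻¹ * (A - 1) - X * (A⁻¹)ᵀ) := by
    rw [Matrix.sub_mul, Matrix.one_mul, Matrix.sub_mul, Matrix.mul_assoc (Y * A⁻¹) Xᵀ Y, hXY,
      Matrix.mul_assoc (X * (A⁻¹)ᵀ) Yᵀ Y, hY, Matrix.mul_one]
  rw [lhs, rhs, Matrix.mul_sub, Matrix.mul_one, Matrix.mul_assoc Y A⁻¹ A, h1, Matrix.mul_one]
  abel
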